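/- Let (N,g) be a complete Riemannian manifold, y ∈ N, ξ a unit tangent vector at y, γ the geodesic with γ(0)=y, γ'(0)=ξ, and τ(y,ξ) = sup{t>0 : d_g(y,γ(t)) = t} the cut time. Suppose 0 < s ≤ τ(y,ξ), x = γ(s), and r > 0. If τ(y,ξ) < s + r, then there exists ε > 0 such that B(x, r+ε) ⊂ cl(B(y, s+r)). -/

import Mathlib

/-- A unit-speed minimizing geodesic segment on `[a,b]`, in metric terms. -/
def IsMinGeodOn {N : Type*} [MetricSpace N] (γ : ℝ → N) (a b : ℝ) : Prop :=
  ∀ s ∈ Set.Icc a b, ∀ t ∈ Set.Icc a b, dist (γ s) (γ t) = |s - t|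

/-- A (complete, unit-speed) geodesic: a curve that is locally distance minimizing. -/
def IsGeodesic {N : Type*} [MetricSpace N] (γ : ℝ → N) : Prop :=
  ∀ t : ℝ, ∃ ε > 0, IsMinGeodOn γ (t - ε) (t + ε)

/-- The cut time `τ(y,ξ) = sup {t > 0 : dist(γ 0, γ t) = t}` of a unit-speed geodesic
(valued in `ℝ≥0∞`, so `τ = ∞` when the geodesic is minimizing forever). -/
noncomputable def cutTime {N : Type*} [MetricSpace N] (γ : ℝ → N) : ENNReal :=
  sSup (ENNReal.ofReal '' {t : ℝ | 0 < t ∧ dist (γ 0) (γ t) = t})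

lemma IsGeodesic.continuous' {N : Type*} [MetricSpace N] {γ : ℝ → N}
    (h : IsGeodesic γ) : Continuous γ := by
  rw [Metric.continuous_iff]
  intro b e he
  obtain ⟨ε, hε, hmin⟩ := h b
  refine ⟨min ε e, lt_min hε he, fun a hab => ?_⟩
  have h1 : |a - b| < min ε e := by rwa [Real.dist_eq] at hab
  have h2 : |a - b| < ε := h1.trans_le (min_le_left _ _)
  rw [abs_sub_lt_iff] at h2
  have : dist (γ a) (γ b) = |a - b| :=
    hmin a ⟨by linarith, by linarith⟩ b ⟨by linarith, by linarith⟩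
  rw [this]
  exact h1.trans_le (min_le_right _ _)

lemma IsGeodesic.lip' {N : Type*} [MetricSpace N] {γ : ℝ → N}
    (h : IsGeodesic γ) {a b : ℝ} (hab : a ≤ b) : dist (γ a) (γ b) ≤ b - a := by
  set S := {t | t ∈ Set.Icc a b ∧ dist (γ a) (γ t) ≤ t - a} with hS
  have hne : a ∈ S := ⟨⟨le_refl _, hab⟩, by simp⟩
  have hbdd : BddAbove S := ⟨b, fun t ht => ht.1.2⟩
  have hclosed : IsClosed S := by
    apply (isClosed_Icc).inter
    exact isClosed_le (Continuous.dist continuous_const h.continuous')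
      (continuous_id.sub continuous_const)
  have hT : sSup S ∈ S := hclosed.csSup_mem ⟨a, hne⟩ hbdd
  set T := sSup S with hTdef
  have hTb : T = b := by
    by_contra hne'
    have hTlt : T < b := lt_of_le_of_ne hT.1.2 hne'
    obtain ⟨ε, hε, hmin⟩ := h T
    set ε' := min ε (b - T) with hε'def
    have hε' : 0 < ε' := lt_min hε (by linarith)
    have hεε : ε' ≤ ε := min_le_left _ _
    have hmem : T + ε' ∈ S := by
      refine ⟨⟨le_trans hT.1.1 (by linarith), by
        have := min_le_right ε (b - T); linarith⟩, ?_⟩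
      have hd : dist (γ T) (γ (T + ε')) = ε' := by
        have := hmin T ⟨by linarith, by linarith⟩ (T + ε') ⟨by linarith, by linarith⟩
        rw [this]; rw [abs_of_nonpos (by linarith)]; ring
      calc dist (γ a) (γ (T + ε')) ≤ dist (γ a) (γ T) + dist (γ T) (γ (T + ε')) :=
            dist_triangle _ _ _
        _ ≤ (T - a) + ε' := by rw [hd]; linarith [hT.2]
        _ = T + ε' - a := by ring
    have := le_csSup hbdd hmem
    linarith
  have := hT.2
  rwa [hTb] at this

lemma IsGeodesic.lip {N : Type*} [MetricSpace N] {γ : ℝ → N}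
    (h : IsGeodesic γ) (a b : ℝ) : dist (γ a) (γ b) ≤ |a - b| := by
  rcases le_total a b with hab | hab
  · rw [abs_sub_comm, abs_of_nonneg (by linarith)]; exact h.lip' hab
  · rw [abs_of_nonneg (by linarith), dist_comm]; exact h.lip' hab

/-- Let `(N,g)` be a complete Riemannian manifold (proper metric space
with minimizing geodesics joining any two points and geodesic rigidity), `γ` a unit-speed
geodesic with `γ 0 = y`, and `0 < s ≤ τ(y,ξ)`, `x = γ s`, `r > 0`.  If the cut time
satisfies `τ(y,ξ) < s + r`, then there is `ε > 0` with
`B(x, r+ε) ⊆ cl(B(y, s+r))`. -/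
theorem ball_subset_closure_ball_of_cutTime_lt
    {N : Type*} [MetricSpace N] [ProperSpace N]
    (hconn : ∀ x y : N, ∃ γ : ℝ → N, IsGeodesic γ ∧ γ 0 = x ∧ γ (dist x y) = y ∧
      IsMinGeodOn γ 0 (dist x y))
    (hrig : ∀ γ₁ γ₂ : ℝ → N, IsGeodesic γ₁ → IsGeodesic γ₂ →
      ∀ a b : ℝ, a < b → (∀ t ∈ Set.Icc a b, γ₁ t = γ₂ t) → γ₁ = γ₂)
    (γ : ℝ → N) (hγ : IsGeodesic γ) (y : N) (hy : γ 0 = y)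
    (s r : ℝ) (hs : 0 < s) (hr : 0 < r)
    (hsτ : ENNReal.ofReal s ≤ cutTime γ)
    (hτ : cutTime γ < ENNReal.ofReal (s + r)) :
    ∃ ε > 0, Metric.ball (γ s) (r + ε) ⊆ closure (Metric.ball y (s + r)) := by
  by_contra hcon
  push_neg at hcon
  have hz : ∀ n : ℕ, ∃ w, w ∈ Metric.ball (γ s) (r + 1 / (n + 1)) ∧
      w ∉ closure (Metric.ball y (s + r)) := by
    intro n
    exact Set.not_subset.1 (hcon (1 / (n + 1)) (by positivity))
  choose w hw1 hw2 using hz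
  -- the sequence lies in a compact closed ball
  have hsub : ∀ n, w n ∈ Metric.closedBall (γ s) (r + 1) := by
    intro n
    have h1 : dist (w n) (γ s) < r + 1 / (n + 1) := Metric.mem_ball.1 (hw1 n)
    have h2 : (1 : ℝ) / (n + 1) ≤ 1 := by
      rw [div_le_one (by positivity)]; simp
    exact Metric.mem_closedBall.2 (by linarith)
  obtain ⟨z, hzmem, φ, hφ, hconv⟩ :=
    (isCompact_closedBall (γ s) (r + 1)).tendsto_subseq hsub
  -- dist (γ s) z ≤ r
  have hzero : Filter.Tendsto (fun n : ℕ => (1 : ℝ) / (φ n + 1)) Filter.atTop (nhds 0) := by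
    have := (tendsto_one_div_add_atTop_nhds_zero_nat (𝕜 := ℝ)).comp hφ.tendsto_atTop
    simpa [Function.comp_def] using this
  have hxz_le : dist (γ s) z ≤ r := by
    have ht1 : Filter.Tendsto (fun n => dist (γ s) (w (φ n))) Filter.atTop
        (nhds (dist (γ s) z)) := Filter.Tendsto.dist tendsto_const_nhds hconv
    have ht2 : Filter.Tendsto (fun n : ℕ => r + 1 / ((φ n : ℝ) + 1)) Filter.atTop
        (nhds r) := by simpa using tendsto_const_nhds.add hzero
    refine le_of_tendsto_of_tendsto' ht1 ht2 fun n => ?_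
    have := Metric.mem_ball.1 (hw1 (φ n))
    rw [dist_comm] at this
    exact this.le
  -- dist y z ≥ s + r
  have hyz_ge : s + r ≤ dist y z := by
    have ht1 : Filter.Tendsto (fun n => dist y (w (φ n))) Filter.atTop
        (nhds (dist y z)) := Filter.Tendsto.dist tendsto_const_nhds hconv
    refine le_of_tendsto_of_tendsto' (tendsto_const_nhds) ht1 fun n => ?_
    have hnotball : w (φ n) ∉ Metric.ball y (s + r) :=
      fun hmem => hw2 (φ n) (subset_closure hmem)
    have := Metric.mem_ball.not.1 hnotball
    rw [dist_comm] at this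
    linarith [not_lt.1 this]
  have hyx : dist y (γ s) ≤ s := by
    have := hγ.lip 0 s
    rw [hy] at this
    rwa [zero_sub, abs_neg, abs_of_pos hs] at this
  have htri : dist y z ≤ dist y (γ s) + dist (γ s) z := dist_triangle _ _ _
  have hxz : dist (γ s) z = r := le_antisymm hxz_le (by linarith)
  have hyz : dist y z = s + r := le_antisymm (by linarith) hyz_ge
  have hyx' : dist y (γ s) = s := by linarith
  -- minimizing geodesic from γ s to z
  obtain ⟨η, hηg, hη0, hηr, hηmin⟩ := hconn (γ s) z
  rw [hxz] at hηr hηmin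
  -- the concatenation
  set σ : ℝ → N := fun t => if t ≤ s then γ t else η (t - s) with hσdef
  have hσγ : ∀ t, t ≤ s → σ t = γ t := fun t ht => if_pos ht
  have hσeta : ∀ t, s ≤ t → σ t = η (t - s) := by
    intro t ht
    rcases eq_or_lt_of_le ht with h | h
    · rw [← h, sub_self, hη0, hσγ s le_rfl]
    · exact if_neg (not_le.2 h)
  have hσ0 : σ 0 = y := by rw [hσγ 0 hs.le, hy]
  have hσsr : σ (s + r) = z := by
    rw [hσeta (s + r) (by linarith), add_sub_cancel_left, hηr]
  -- distance bounds along σ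
  have hA : ∀ t ∈ Set.Icc (0 : ℝ) (s + r), dist y (σ t) ≤ t := by
    rintro t ⟨ht0, ht1⟩
    by_cases hts : t ≤ s
    · rw [hσγ t hts, ← hy]
      have := hγ.lip 0 t
      rwa [zero_sub, abs_neg, abs_of_nonneg ht0] at this
    · push_neg at hts
      rw [hσeta t hts.le]
      have hd : dist (γ s) (η (t - s)) = t - s := by
        have := hηmin 0 ⟨le_rfl, hr.le⟩ (t - s) ⟨by linarith, by linarith⟩
        rw [hη0] at this
        rw [this, zero_sub, abs_neg, abs_of_nonneg (by linarith)]
      calc dist y (η (t - s)) ≤ dist y (γ s) + dist (γ s) (η (t - s)) :=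
            dist_triangle _ _ _
        _ ≤ s + (t - s) := by rw [hd]; linarith
        _ = t := by ring
  have hB : ∀ t ∈ Set.Icc (0 : ℝ) (s + r), dist (σ t) z ≤ s + r - t := by
    rintro t ⟨ht0, ht1⟩
    by_cases hts : t ≤ s
    · rw [hσγ t hts]
      have h1 : dist (γ t) (γ s) ≤ s - t := by
        have := hγ.lip t s
        rwa [abs_of_nonpos (by linarith), neg_sub] at this
      calc dist (γ t) z ≤ dist (γ t) (γ s) + dist (γ s) z := dist_triangle _ _ _
        _ ≤ (s - t) + r := by rw [hxz]; linarith
        _ = s + r - t := by ring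
    · push_neg at hts
      rw [hσeta t hts.le, ← hηr]
      have := hηmin (t - s) ⟨by linarith, by linarith⟩ r ⟨hr.le, le_rfl⟩
      rw [this, abs_of_nonpos (by linarith)]
      linarith
  -- σ is minimizing on [0, s+r]
  have hC : ∀ a ∈ Set.Icc (0 : ℝ) (s + r), ∀ b ∈ Set.Icc (0 : ℝ) (s + r),
      a ≤ b → dist (σ a) (σ b) ≤ b - a := by
    rintro a ⟨ha0, ha1⟩ b ⟨hb0, hb1⟩ hab
    by_cases hbs : b ≤ s
    · rw [hσγ a (hab.trans hbs), hσγ b hbs]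
      have := hγ.lip a b
      rwa [abs_of_nonpos (by linarith), neg_sub] at this
    · push_neg at hbs
      by_cases has : s ≤ a
      · rw [hσeta a has, hσeta b hbs.le]
        have := hηmin (a - s) ⟨by linarith, by linarith⟩ (b - s) ⟨by linarith, by linarith⟩
        rw [this, abs_of_nonpos (by linarith)]
        linarith
      · push_neg at has
        have h1 : dist (σ a) (γ s) ≤ s - a := by
          rw [hσγ a has.le]
          have := hγ.lip a s
          rwa [abs_of_nonpos (by linarith), neg_sub] at this
        have h2 : dist (γ s) (σ b) ≤ b - s := by
          rw [hσeta b hbs.le, ← hη0]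
          have := hηmin 0 ⟨le_rfl, hr.le⟩ (b - s) ⟨by linarith, by linarith⟩
          rw [this, zero_sub, abs_neg, abs_of_nonneg (by linarith)]
        calc dist (σ a) (σ b) ≤ dist (σ a) (γ s) + dist (γ s) (σ b) := dist_triangle _ _ _
          _ ≤ (s - a) + (b - s) := by linarith
          _ = b - a := by ring
  have hminle : ∀ a ∈ Set.Icc (0 : ℝ) (s + r), ∀ b ∈ Set.Icc (0 : ℝ) (s + r),
      a ≤ b → dist (σ a) (σ b) = b - a := by
    intro a ha b hb hab
    refine le_antisymm (hC a ha b hb hab) ?_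
    have h4 : dist y z ≤ dist y (σ a) + dist (σ a) (σ b) + dist (σ b) z :=
      dist_triangle4 _ _ _ _
    have := hA a ha
    have := hB b hb
    linarith [hyz ▸ h4]
  have hσmin : IsMinGeodOn σ 0 (s + r) := by
    intro a ha b hb
    rcases le_total a b with hab | hab
    · rw [abs_of_nonpos (by linarith), neg_sub]
      exact hminle a ha b hb hab
    · rw [abs_of_nonneg (by linarith), dist_comm]
      exact hminle b hb a ha hab
  -- σ is a geodesic
  have hσgeo : IsGeodesic σ := by
    intro t
    by_cases h1 : t ≤ 0
    · obtain ⟨ε₀, hε₀, hm⟩ := hγ t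
      refine ⟨min ε₀ (s - t), lt_min hε₀ (by linarith), ?_⟩
      intro u hu v hv
      have hu2 : u ≤ s := by
        have := hu.2; have := min_le_right ε₀ (s - t); linarith
      have hv2 : v ≤ s := by
        have := hv.2; have := min_le_right ε₀ (s - t); linarith
      have hu1 : u ∈ Set.Icc (t - ε₀) (t + ε₀) := by
        constructor
        · have := hu.1; have := min_le_left ε₀ (s - t); linarith
        · have := hu.2; have := min_le_left ε₀ (s - t); linarith
      have hv1 : v ∈ Set.Icc (t - ε₀) (t + ε₀) := by
        constructor
        · have := hv.1; have := min_le_left ε₀ (s - t); linarith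
        · have := hv.2; have := min_le_left ε₀ (s - t); linarith
      rw [hσγ u hu2, hσγ v hv2]
      exact hm u hu1 v hv1
    · push_neg at h1
      by_cases h2 : s + r ≤ t
      · obtain ⟨ε₀, hε₀, hm⟩ := hηg (t - s)
        refine ⟨min ε₀ (t - s), lt_min hε₀ (by linarith), ?_⟩
        intro u hu v hv
        have hu2 : s ≤ u := by
          have := hu.1; have := min_le_right ε₀ (t - s); linarith
        have hv2 : s ≤ v := by
          have := hv.1; have := min_le_right ε₀ (t - s); linarith
        have hu1 : u - s ∈ Set.Icc (t - s - ε₀) (t - s + ε₀) := by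
          constructor
          · have := hu.1; have := min_le_left ε₀ (t - s); linarith
          · have := hu.2; have := min_le_left ε₀ (t - s); linarith
        have hv1 : v - s ∈ Set.Icc (t - s - ε₀) (t - s + ε₀) := by
          constructor
          · have := hv.1; have := min_le_left ε₀ (t - s); linarith
          · have := hv.2; have := min_le_left ε₀ (t - s); linarith
        rw [hσeta u hu2, hσeta v hv2]
        have := hm (u - s) hu1 (v - s) hv1
        rw [this]
        congr 1
        ring
      · push_neg at h2
        refine ⟨min t (s + r - t), lt_min h1 (by linarith), ?_⟩
        intro u hu v hv
        have hmin1 := min_le_left t (s + r - t)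
        have hmin2 := min_le_right t (s + r - t)
        refine hσmin u ⟨?_, ?_⟩ v ⟨?_, ?_⟩
        · have := hu.1; linarith
        · have := hu.2; linarith
        · have := hv.1; linarith
        · have := hv.2; linarith
  -- rigidity: σ = γ
  have heq : σ = γ := hrig σ γ hσgeo hγ 0 s hs (fun t ht => hσγ t ht.2)
  -- hence γ is minimizing up to s + r, contradicting cutTime < s + r
  have hfin : dist (γ 0) (γ (s + r)) = s + r := by
    have := hminle 0 ⟨le_rfl, by linarith⟩ (s + r) ⟨by linarith, le_rfl⟩ (by linarith)
    rw [heq] at this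
    linarith
  have hmem : ENNReal.ofReal (s + r) ∈
      ENNReal.ofReal '' {t : ℝ | 0 < t ∧ dist (γ 0) (γ t) = t} :=
    ⟨s + r, ⟨by linarith, hfin⟩, rfl⟩
  have : ENNReal.ofReal (s + r) ≤ cutTime γ := le_sSup hmem
  exact absurd hτ (not_lt.2 this)
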